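/- Let a, b, c be three points in ℂⁿ not lying on a single complex line (more precisely, c is not on the complex line through a and b). Then the triangle boundary σ = [a,b] ∪ [b,c] ∪ [c,a] (the union of the three straight-line segments) is a polynomially convex compact subset of ℂⁿ. -/

import Mathlib

open Set

/-- The polynomial hull of a set `X ⊆ ℂⁿ`. -/
def polyHull {n : ℕ} (X : Set (Fin n → ℂ)) : Set (Fin n → ℂ) :=
  {z | ∀ P : MvPolynomial (Fin n) ℂ,
    ‖MvPolynomial.eval z P‖ ≤ sSup ((fun x => ‖MvPolynomial.eval x P‖) '' X)}

section Aux

lemma isCompact_seg {E : Type*} [AddCommGroup E] [Module ℝ E] [TopologicalSpace E]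
    [IsTopologicalAddGroup E] [ContinuousSMul ℝ E] (x y : E) :
    IsCompact (segment ℝ x y) := by
  rw [segment_eq_image']
  exact isCompact_Icc.image (by continuity)

lemma expTrick {n : ℕ} {K : Set (Fin n → ℂ)} {z : Fin n → ℂ}
    (hz : ∀ P : MvPolynomial (Fin n) ℂ,
      ‖MvPolynomial.eval z P‖ ≤ sSup ((fun x => ‖MvPolynomial.eval x P‖) '' K))
    (P : MvPolynomial (Fin n) ℂ) {m δ r : ℝ} (hδ : 0 ≤ δ) (hr : 0 ≤ r) (hδm : δ ≤ m)
    (hPK : ∀ w ∈ K, ∃ g : ℝ, MvPolynomial.eval w P = (g : ℂ) ∧ -m ≤ g ∧ g ≤ -δ)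
    (hPz : MvPolynomial.eval z P = (r : ℂ)) : r = 0 ∧ δ = 0 := by
  set N : ℕ := ⌈m⌉₊ + 1 with hNdef
  have hN0 : (0:ℝ) < N := by positivity
  have hmN : m ≤ N := le_trans (Nat.le_ceil m) (by exact_mod_cast Nat.le_succ _)
  set Q : MvPolynomial (Fin n) ℂ := (1 + MvPolynomial.C ((N:ℂ))⁻¹ * P) ^ N with hQdef
  have hbase : (0:ℝ) ≤ 1 - δ / N := by
    have : δ / N ≤ 1 := by rw [div_le_one hN0]; linarith
    linarith
  have hb1 : (1 - δ / N) ^ N ≤ 1 := pow_le_one₀ hbase (by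
    have : 0 ≤ δ / N := by positivity
    linarith)
  have hQz : MvPolynomial.eval z Q = (((1 + r / N) ^ N : ℝ) : ℂ) := by
    rw [hQdef, map_pow, map_add, map_mul, map_one, MvPolynomial.eval_C, hPz]
    push_cast
    ring_nf
  have hQznorm : (1 + r / N) ^ N ≤ sSup ((fun x => ‖MvPolynomial.eval x Q‖) '' K) := by
    have h := hz Q
    rwa [hQz, Complex.norm_real, Real.norm_of_nonneg (by positivity)] at h
  have hsup : sSup ((fun x => ‖MvPolynomial.eval x Q‖) '' K) ≤ (1 - δ / N) ^ N := by
    apply Real.sSup_le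
    · rintro y ⟨w, hw, rfl⟩
      obtain ⟨g, hg, hg1, hg2⟩ := hPK w hw
      have hQw : MvPolynomial.eval w Q = (((1 + g / N) ^ N : ℝ) : ℂ) := by
        rw [hQdef, map_pow, map_add, map_mul, map_one, MvPolynomial.eval_C, hg]
        push_cast
        ring_nf
      have h0 : (0:ℝ) ≤ 1 + g / N := by
        have h1 : (-1:ℝ) ≤ g / N := by rw [le_div_iff₀ hN0]; nlinarith
        linarith
      show ‖MvPolynomial.eval w Q‖ ≤ (1 - δ / N) ^ N
      rw [hQw, Complex.norm_real, Real.norm_of_nonneg (by positivity)]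
      apply pow_le_pow_left₀ h0
      have h2 : g / (N:ℝ) ≤ -δ / N := by gcongr
      rw [neg_div] at h2
      linarith
    · positivity
  have hlow : 1 + r ≤ (1 + r / N) ^ N := by
    have hrN : (0:ℝ) ≤ r / N := by positivity
    have h := one_add_mul_le_pow (a := r / N) (by linarith : (-2:ℝ) ≤ r / N) N
    have hc : (N:ℝ) * (r / N) = r := by field_simp
    linarith [h, hc.ge, hc.le]
  have hkey : 1 + r ≤ (1 - δ / N) ^ N := le_trans hlow (le_trans hQznorm hsup)
  constructor
  · linarith
  · by_contra hne
    have hδ' : 0 < δ := lt_of_le_of_ne hδ (Ne.symm hne)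
    have : (1 - δ / N) ^ N < 1 := by
      apply pow_lt_one₀ hbase (by
        have : 0 < δ / N := by positivity
        linarith) (by positivity)
    linarith

noncomputable def linPoly {n : ℕ} (ℓ : ((Fin n → ℂ)) →ₗ[ℂ] ℂ) : MvPolynomial (Fin n) ℂ :=
  ∑ i, MvPolynomial.C (ℓ fun j => if i = j then 1 else 0) * MvPolynomial.X i

lemma eval_linPoly {n : ℕ} (ℓ : ((Fin n → ℂ)) →ₗ[ℂ] ℂ) (z : Fin n → ℂ) :
    MvPolynomial.eval z (linPoly ℓ) = ℓ z := by
  rw [LinearMap.pi_apply_eq_sum_univ ℓ z, linPoly, map_sum]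
  refine Finset.sum_congr rfl fun i _ => ?_
  rw [map_mul, MvPolynomial.eval_C, MvPolynomial.eval_X, smul_eq_mul, mul_comm]

/-- The triangle boundary in `ℝ × ℝ`. -/
def Tb : Set (ℝ × ℝ) :=
  segment ℝ (0,0) (1,0) ∪ segment ℝ (1,0) (0,1) ∪ segment ℝ (0,1) (0,0)

noncomputable def Phi {n : ℕ} (a u v : Fin n → ℂ) : (ℝ × ℝ) →ᵃ[ℝ] (Fin n → ℂ) :=
  AffineMap.mk (fun p => a + p.1 • u + p.2 • v)
    ((LinearMap.fst ℝ ℝ ℝ).smulRight u + (LinearMap.snd ℝ ℝ ℝ).smulRight v)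
    (by intro p q; simp [LinearMap.smulRight_apply, add_smul]; module)

lemma Phi_apply {n : ℕ} (a u v : Fin n → ℂ) (p : ℝ × ℝ) :
    Phi a u v p = a + p.1 • u + p.2 • v := rfl

lemma sigma_eq {n : ℕ} (a b c : Fin n → ℂ) :
    segment ℝ a b ∪ segment ℝ b c ∪ segment ℝ c a = Phi a (b - a) (c - a) '' Tb := by
  have h0 : Phi a (b-a) (c-a) (0,0) = a := by simp [Phi_apply]
  have h1 : Phi a (b-a) (c-a) (1,0) = b := by simp [Phi_apply]
  have h2 : Phi a (b-a) (c-a) (0,1) = c := by simp [Phi_apply]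
  rw [Tb, image_union, image_union, image_segment ℝ, image_segment ℝ,
    image_segment ℝ, h0, h1, h2]

lemma Tb_compact : IsCompact Tb := by
  rw [Tb]
  exact ((isCompact_seg _ _).union (isCompact_seg _ _)).union (isCompact_seg _ _)

lemma Tb_nonempty : Tb.Nonempty :=
  ⟨(0,0), Or.inl (Or.inl (left_mem_segment ℝ _ _))⟩

lemma Tb_bound {p : ℝ × ℝ} (hp : p ∈ Tb) : 0 ≤ p.1 ∧ p.1 ≤ 1 ∧ 0 ≤ p.2 ∧ p.2 ≤ 1 := by
  have key : ∀ x y : ℝ × ℝ, 0 ≤ x.1 → x.1 ≤ 1 → 0 ≤ x.2 → x.2 ≤ 1 →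
      0 ≤ y.1 → y.1 ≤ 1 → 0 ≤ y.2 → y.2 ≤ 1 → ∀ q ∈ segment ℝ x y,
      0 ≤ q.1 ∧ q.1 ≤ 1 ∧ 0 ≤ q.2 ∧ q.2 ≤ 1 := by
    rintro x y a1 a2 a3 a4 b1 b2 b3 b4 q ⟨s, t, hs, ht, hst, rfl⟩
    simp only [Prod.fst_add, Prod.snd_add, Prod.smul_fst, Prod.smul_snd, smul_eq_mul]
    refine ⟨by nlinarith, by nlinarith, by nlinarith, by nlinarith⟩
  rcases hp with (hp | hp) | hp
  · exact key _ _ le_rfl zero_le_one le_rfl zero_le_one zero_le_one le_rfl le_rfl zero_le_one _ hp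
  · exact key _ _ zero_le_one le_rfl le_rfl zero_le_one le_rfl zero_le_one zero_le_one le_rfl _ hp
  · exact key _ _ le_rfl zero_le_one zero_le_one le_rfl le_rfl zero_le_one le_rfl zero_le_one _ hp

lemma sq_add_sq_eq_zero (x y : ℝ) (h : x^2 + y^2 = 0) : x = 0 ∧ y = 0 := by
  constructor <;> nlinarith [sq_nonneg x, sq_nonneg y]

lemma gbound (x y : ℝ) {p : ℝ × ℝ} (hp : p ∈ Tb) :
    -((|x|+1)^2 + (|y|+1)^2) ≤ -((p.1-x)^2 + (p.2-y)^2) ∧ -((p.1-x)^2 + (p.2-y)^2) ≤ 0 := by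
  obtain ⟨h1, h2, h3, h4⟩ := Tb_bound hp
  have e1 : |x| ≥ x := le_abs_self x
  have e2 : |x| ≥ -x := neg_le_abs x
  have e3 : |y| ≥ y := le_abs_self y
  have e4 : |y| ≥ -y := neg_le_abs y
  constructor
  · nlinarith
  · nlinarith

lemma sq_of_im {γ : ℂ} : (γ - (γ.re : ℂ)) ^ 2 = -(((γ.im : ℝ) : ℂ)) ^ 2 := by
  have hγ : γ - (γ.re : ℂ) = (γ.im : ℂ) * Complex.I := by
    rw [Complex.ext_iff]
    simp
  rw [hγ, mul_pow, Complex.I_sq]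
  ring

end Aux

set_option maxHeartbeats 2000000 in
/-- If `a`, `b`, `c` are points of `ℂⁿ` with `c` not on the complex line through `a` and
`b`, then the triangle boundary `σ = [a,b] ∪ [b,c] ∪ [c,a]` is a polynomially convex
compact subset of `ℂⁿ`. -/
theorem stmt_17 {n : ℕ} (a b c : Fin n → ℂ) (hab : a ≠ b)
    (hc : ∀ t : ℂ, c ≠ a + t • (b - a)) :
    IsCompact (segment ℝ a b ∪ segment ℝ b c ∪ segment ℝ c a) ∧
    polyHull (segment ℝ a b ∪ segment ℝ b c ∪ segment ℝ c a)
      = segment ℝ a b ∪ segment ℝ b c ∪ segment ℝ c a := by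
  classical
  set σ : Set (Fin n → ℂ) := segment ℝ a b ∪ segment ℝ b c ∪ segment ℝ c a with hσdef
  have hσc : IsCompact σ :=
    ((isCompact_seg a b).union (isCompact_seg b c)).union (isCompact_seg c a)
  refine ⟨hσc, ?_⟩
  apply Set.Subset.antisymm
  swap
  · -- σ ⊆ polyHull σ
    intro w hw P
    apply le_csSup
    · exact (hσc.image (continuous_norm.comp (MvPolynomial.continuous_eval P))).bddAbove
    · exact ⟨w, hw, rfl⟩
  intro z hz
  -- setup
  set u : Fin n → ℂ := b - a with hu
  set v : Fin n → ℂ := c - a with hv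
  have hσT : σ = Phi a u v '' Tb := sigma_eq a b c
  have hvu : ∀ t : ℂ, v ≠ t • u := by
    intro t h
    apply hc t
    rw [hu, hv] at h
    linear_combination (norm := module) h
  have hu0 : u ≠ 0 := by
    intro h
    apply hab
    rw [hu] at h
    linear_combination (norm := module) -h
  have huv : u ≠ v := fun h => hvu 1 (by rw [one_smul, h])
  have hindep : LinearIndependent ℂ ![u, v] := by
    rw [LinearIndependent.pair_iff]
    intro s t hst
    by_cases ht : t = 0
    · subst ht
      refine ⟨?_, rfl⟩
      rw [zero_smul, add_zero, smul_eq_zero] at hst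
      exact hst.resolve_right hu0
    · exfalso
      have h2 : t • v = (-s) • u := by linear_combination (norm := module) hst
      have h3 : v = (t⁻¹ * (-s)) • u := by
        rw [mul_smul, ← h2, smul_smul, inv_mul_cancel₀ ht, one_smul]
      exact hvu _ h3
  have hrange : Set.range ![u, v] = ({u, v} : Set (Fin n → ℂ)) := by
    ext x
    simp [Fin.exists_fin_two]
    tauto
  have hset : LinearIndepOn ℂ id ({u, v} : Set (Fin n → ℂ)) := by
    have := hindep.linearIndepOn_id
    rwa [hrange] at this
  set B := Module.Basis.extend hset with hB
  have hmemu : u ∈ hset.extend (Set.subset_univ _) := hset.subset_extend _ (by simp)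
  have hmemv : v ∈ hset.extend (Set.subset_univ _) := hset.subset_extend _ (by simp)
  set iu : hset.extend (Set.subset_univ _) := ⟨u, hmemu⟩ with hiu
  set iv : hset.extend (Set.subset_univ _) := ⟨v, hmemv⟩ with hiv
  have hBu : B iu = u := Module.Basis.extend_apply_self hset iu
  have hBv : B iv = v := Module.Basis.extend_apply_self hset iv
  have hne : iu ≠ iv := fun h => huv (by simpa [hiu, hiv, Subtype.ext_iff] using h)
  have hcoord : ∀ j i : hset.extend (Set.subset_univ _),
      B.coord j (B i) = if i = j then 1 else 0 := by
    intro j i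
    rw [Module.Basis.coord_apply, Module.Basis.repr_self, Finsupp.single_apply]
  have hcu_u : B.coord iu u = 1 := by have := hcoord iu iu; rw [hBu] at this; simpa using this
  have hcu_v : B.coord iu v = 0 := by
    have := hcoord iu iv; rw [hBv] at this; simpa [Ne.symm hne] using this
  have hcv_u : B.coord iv u = 0 := by
    have := hcoord iv iu; rw [hBu] at this; simpa [hne] using this
  have hcv_v : B.coord iv v = 1 := by have := hcoord iv iv; rw [hBv] at this; simpa using this
  have hco_u : ∀ j, j ≠ iu → B.coord j u = 0 := by
    intro j hj; have := hcoord j iu; rw [hBu] at this; simpa [hj.symm] using this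
  have hco_v : ∀ j, j ≠ iv → B.coord j v = 0 := by
    intro j hj; have := hcoord j iv; rw [hBv] at this; simpa [hj.symm] using this
  -- evaluation of affine-linear polynomials
  have heval : ∀ (ℓ : ((Fin n → ℂ)) →ₗ[ℂ] ℂ) (w : Fin n → ℂ),
      MvPolynomial.eval w (linPoly ℓ - MvPolynomial.C (ℓ a)) = ℓ (w - a) := by
    intro ℓ w
    rw [map_sub, eval_linPoly, MvPolynomial.eval_C, ← map_sub]
  -- value of functionals on points of σ
  have hwσ : ∀ w ∈ σ, ∃ p ∈ Tb, ∀ ℓ : ((Fin n → ℂ)) →ₗ[ℂ] ℂ,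
      ℓ (w - a) = (p.1 : ℂ) * ℓ u + (p.2 : ℂ) * ℓ v := by
    intro w hw
    rw [hσT] at hw
    obtain ⟨p, hp, rfl⟩ := hw
    refine ⟨p, hp, fun ℓ => ?_⟩
    rw [Phi_apply]
    have : a + p.1 • u + p.2 • v - a = p.1 • u + p.2 • v := by abel
    rw [this, map_add, LinearMap.map_smul_of_tower, LinearMap.map_smul_of_tower]
    simp [Complex.real_smul]
  -- Step A : z - a lies in the complex span of u and v
  have hzero : ∀ j, j ≠ iu → j ≠ iv → B.repr (z - a) j = 0 := by
    intro j hj1 hj2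
    have h := hz (linPoly (B.coord j) - MvPolynomial.C (B.coord j a))
    rw [heval] at h
    have hsup : sSup ((fun x => ‖MvPolynomial.eval x
        (linPoly (B.coord j) - MvPolynomial.C (B.coord j a))‖) '' σ) ≤ 0 := by
      apply Real.sSup_le _ le_rfl
      rintro y ⟨w, hw, rfl⟩
      obtain ⟨p, hp, hℓ⟩ := hwσ w hw
      show ‖MvPolynomial.eval w (linPoly (B.coord j) - MvPolynomial.C (B.coord j a))‖ ≤ 0
      rw [heval, hℓ, hco_u j hj1, hco_v j hj2]
      simp
    have : ‖B.coord j (z - a)‖ ≤ 0 := le_trans h hsup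
    have h0 : B.coord j (z - a) = 0 := norm_le_zero_iff.mp this
    rwa [Module.Basis.coord_apply] at h0
  set α : ℂ := B.coord iu (z - a) with hα
  set β : ℂ := B.coord iv (z - a) with hβ
  have hzrep : z - a = α • u + β • v := by
    set f := B.repr (z - a) with hf
    have hfe : f = Finsupp.single iu (f iu) + Finsupp.single iv (f iv) := by
      ext j
      rcases eq_or_ne j iu with rfl | h1
      · simp [Finsupp.single_apply, Ne.symm hne]
      · rcases eq_or_ne j iv with rfl | h2
        · simp [Finsupp.single_apply, hne, Ne.symm h1]
        · simp [Finsupp.single_apply, Ne.symm h1, Ne.symm h2, hzero j h1 h2]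
    have htot := B.linearCombination_repr (z - a)
    rw [← hf, hfe, map_add, Finsupp.linearCombination_single, Finsupp.linearCombination_single,
      hBu, hBv] at htot
    have e1 : α = f iu := by rw [hα, Module.Basis.coord_apply]
    have e2 : β = f iv := by rw [hβ, Module.Basis.coord_apply]
    rw [e1, e2]
    exact htot.symm
  -- the quadratic polynomial used for the exponential trick
  set lam := B.coord iu with hlam
  set mu := B.coord iv with hmu
  have hlamz : lam (z - a) = α := rfl
  have hmuz : mu (z - a) = β := rfl
  set Pq : ℝ → ℝ → MvPolynomial (Fin n) ℂ := fun x y =>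
    -(linPoly lam - MvPolynomial.C (lam a) - MvPolynomial.C (x:ℂ))^2
    - (linPoly mu - MvPolynomial.C (mu a) - MvPolynomial.C (y:ℂ))^2 with hPq
  have hPqeval : ∀ (x y : ℝ) (w : Fin n → ℂ),
      MvPolynomial.eval w (Pq x y) = -(lam (w - a) - x)^2 - (mu (w - a) - y)^2 := by
    intro x y w
    have h1 : lam (w - a) = lam w - lam a := map_sub _ _ _
    have h2 : mu (w - a) = mu w - mu a := map_sub _ _ _
    rw [hPq]
    simp only [map_sub, map_neg, map_pow, MvPolynomial.eval_C, eval_linPoly]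
    try rw [h1, h2]
    try ring
  -- value of Pq on σ
  have hPqσ : ∀ (x y : ℝ) (w : Fin n → ℂ), w ∈ σ → ∃ p ∈ Tb,
      MvPolynomial.eval w (Pq x y) = ((-((p.1-x)^2 + (p.2-y)^2) : ℝ) : ℂ) := by
    intro x y w hw
    obtain ⟨p, hp, hℓ⟩ := hwσ w hw
    refine ⟨p, hp, ?_⟩
    rw [hPqeval, hℓ lam, hℓ mu, hcu_u, hcu_v, hcv_u, hcv_v]
    push_cast
    ring
  have hgbound := fun (x y : ℝ) {p : ℝ × ℝ} (hp : p ∈ Tb) => gbound x y hp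
  -- Step B : α and β are real
  have hstepB : α.im = 0 ∧ β.im = 0 := by
    have hPz : MvPolynomial.eval z (Pq α.re β.re) = ((α.im^2 + β.im^2 : ℝ) : ℂ) := by
      rw [hPqeval, hlamz, hmuz, sq_of_im (γ := α), sq_of_im (γ := β)]
      push_cast
      ring
    have hδm : (0:ℝ) ≤ (|α.re|+1)^2 + (|β.re|+1)^2 := by positivity
    have := expTrick hz (Pq α.re β.re) le_rfl (by positivity) hδm
      (fun w hw => by
        obtain ⟨p, hp, he⟩ := hPqσ α.re β.re w hw
        exact ⟨_, he, by simpa using (hgbound α.re β.re hp).1,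
          by simpa using (hgbound α.re β.re hp).2⟩)
      hPz
    exact sq_add_sq_eq_zero α.im β.im this.1
  -- Step C : (α.re, β.re) ∈ Tb
  have hαre : α = ((α.re : ℝ) : ℂ) := by
    rw [Complex.ext_iff]; simp [hstepB.1]
  have hβre : β = ((β.re : ℝ) : ℂ) := by
    rw [Complex.ext_iff]; simp [hstepB.2]
  by_contra hzσ
  have hq : ((α.re, β.re) : ℝ × ℝ) ∉ Tb := by
    intro hqin
    apply hzσ
    rw [hσT]
    refine ⟨(α.re, β.re), hqin, ?_⟩
    rw [Phi_apply]
    have hsm : ∀ (r : ℝ) (x : Fin n → ℂ), r • x = ((r:ℂ)) • x := by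
      intro r x
      rw [← algebraMap_smul ℂ r x, Complex.coe_algebraMap]
    simp only [hsm]
    rw [← hαre, ← hβre]
    have := hzrep
    linear_combination (norm := module) -this
  -- distance from (α.re, β.re) to Tb
  obtain ⟨p₀, hp₀, hmin⟩ := Tb_compact.exists_isMinOn Tb_nonempty
    (f := fun p : ℝ × ℝ => (p.1 - α.re)^2 + (p.2 - β.re)^2) (by fun_prop)
  set δ : ℝ := (p₀.1 - α.re)^2 + (p₀.2 - β.re)^2 with hδdef
  have hδpos : 0 < δ := by
    rcases lt_or_eq_of_le (by positivity : (0:ℝ) ≤ δ) with h | h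
    · exact h
    · exfalso
      apply hq
      obtain ⟨h1, h2⟩ := sq_add_sq_eq_zero _ _ h.symm
      have : ((α.re, β.re) : ℝ × ℝ) = p₀ := by
        rw [Prod.ext_iff]
        constructor <;> [linarith; linarith]
      rw [this]; exact hp₀
  have hPz0 : MvPolynomial.eval z (Pq α.re β.re) = (((0:ℝ)) : ℂ) := by
    rw [hPqeval, hlamz, hmuz, ← hαre, ← hβre]
    simp
  have hδm : δ ≤ (|α.re|+1)^2 + (|β.re|+1)^2 := by
    have h := (hgbound α.re β.re hp₀).1
    rw [hδdef]
    linarith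
  have := expTrick hz (Pq α.re β.re) hδpos.le le_rfl hδm
    (fun w hw => by
      obtain ⟨p, hp, he⟩ := hPqσ α.re β.re w hw
      refine ⟨_, he, by simpa using (hgbound α.re β.re hp).1, ?_⟩
      have h2 : (p₀.1 - α.re)^2 + (p₀.2 - β.re)^2 ≤ (p.1 - α.re)^2 + (p.2 - β.re)^2 :=
        hmin hp
      rw [hδdef]
      linarith)
    hPz0
  exact absurd this.2 (ne_of_gt hδpos)
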